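/- The only elements of the antidual SV' annihilated by all annihilation operators a(v), v ∈ V, are the scalar multiples of the vacuum functional <·|1>: if Φ ∈ SV' satisfies a(v)Φ = 0 for all v ∈ V, then Φ is proportional to <·|1>. -/

import Mathlib

open scoped BigOperators ComplexConjugate

/-- The permanent inner product on degree-`d` symmetric tensors. -/
noncomputable def permInner {V : Type*} [NormedAddCommGroup V] [InnerProductSpace ℂ V]
    {d : ℕ} (x y : Fin d → V) : ℂ :=
  ∑ π : Equiv.Perm (Fin d), ∏ k, (inner ℂ (x k) (y (π k)) : ℂ)

/-- The elements of the antidual `SV'` killed by every annihilator are exactly the scalar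
multiples of the vacuum functional `⟨·|1⟩`.  The symmetric algebra `SV` is modelled by a
commutative ℂ-algebra `A` generated by the image of `ι : V →ₗ[ℂ] A`, equipped with the
sesquilinear permanent inner product `B` (with orthogonal homogeneous components), so that
the vacuum functional is `ψ ↦ B ψ 1`.  If the antilinear functional `Φ : A → ℂ` satisfies
`a(v)Φ = 0` for all `v ∈ V`, i.e. `Φ(ι v · ψ) = 0` for all `v, ψ`, then `Φ = λ·⟨·|1⟩` for
some scalar `λ ∈ ℂ`. -/
theorem stmt13 {V : Type*} [NormedAddCommGroup V] [InnerProductSpace ℂ V]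
    {A : Type*} [CommRing A] [Algebra ℂ A] (ι : V →ₗ[ℂ] A)
    (hgen : Algebra.adjoin ℂ (Set.range ι) = ⊤)
    (B : A →ₗ⋆[ℂ] A →ₗ[ℂ] ℂ)
    (hBperm : ∀ {d : ℕ} (x y : Fin d → V),
      B (∏ i, ι (x i)) (∏ i, ι (y i)) = permInner x y)
    (hBorth : ∀ {d e : ℕ}, d ≠ e → ∀ (x : Fin d → V) (y : Fin e → V),
      B (∏ i, ι (x i)) (∏ i, ι (y i)) = 0)
    (Φ : A → ℂ)
    (hadd : ∀ p q : A, Φ (p + q) = Φ p + Φ q)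
    (hsmul : ∀ (c : ℂ) (p : A), Φ (c • p) = conj c * Φ p)
    (hkill : ∀ (v : V) (ψ : A), Φ (ι v * ψ) = 0) :
    ∃ lam : ℂ, ∀ ψ : A, Φ ψ = lam * B ψ 1 := by
  have hΦ0 : Φ 0 = 0 := by
    have h := hadd 0 0
    rw [add_zero] at h
    exact (left_eq_add.mp h)
  -- B 1 1 = 1
  have hB11 : B 1 1 = 1 := by
    have h := hBperm (d := 0) Fin.elim0 Fin.elim0
    simpa [permInner] using h
  -- the submodule where the conclusion holds with lam = Φ 1
  set lam : ℂ := Φ 1 with hlam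
  let K : Submodule ℂ A :=
    { carrier := {a | Φ a = lam * B a 1}
      add_mem' := by
        intro p q hp hq
        simp only [Set.mem_setOf_eq] at *
        rw [hadd, map_add, LinearMap.add_apply, hp, hq]; ring
      zero_mem' := by
        simp only [Set.mem_setOf_eq, hΦ0, map_zero, LinearMap.zero_apply, mul_zero]
      smul_mem' := by
        intro c p hp
        simp only [Set.mem_setOf_eq] at *
        rw [hsmul, map_smulₛₗ, LinearMap.smul_apply, hp, smul_eq_mul]; ring }
  -- every monomial lies in K
  have hmono : ∀ (d : ℕ) (x : Fin d → V), (∏ i, ι (x i)) ∈ K := by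
    intro d x
    cases d with
    | zero =>
        show Φ (∏ i : Fin 0, ι (x i)) = lam * B (∏ i : Fin 0, ι (x i)) 1
        simp [hB11, hlam]
    | succ n =>
        show Φ (∏ i, ι (x i)) = lam * B (∏ i, ι (x i)) 1
        have h1 : Φ (∏ i, ι (x i)) = 0 := by
          rw [Fin.prod_univ_succ]
          exact hkill _ _
        have h2 : B (∏ i, ι (x i)) 1 = 0 := by
          have h := hBorth (d := n + 1) (e := 0) (Nat.succ_ne_zero n) x Fin.elim0
          simpa using h
        rw [h1, h2, mul_zero]
  -- every element of the submonoid closure of range ι is a monomial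
  have hclos : ∀ a ∈ Submonoid.closure (Set.range ι),
      ∃ (d : ℕ) (x : Fin d → V), a = ∏ i, ι (x i) := by
    intro a ha
    induction ha using Submonoid.closure_induction with
    | mem a ha =>
        obtain ⟨v, rfl⟩ := ha
        exact ⟨1, fun _ => v, by simp⟩
    | one => exact ⟨0, Fin.elim0, by simp⟩
    | mul a b _ _ iha ihb =>
        obtain ⟨d, x, rfl⟩ := iha
        obtain ⟨e, y, rfl⟩ := ihb
        refine ⟨d + e, Fin.append x y, ?_⟩
        rw [Fin.prod_univ_add]
        simp [Fin.append_left, Fin.append_right]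
  -- conclude: K = ⊤
  have hK : ∀ a : A, a ∈ K := by
    intro a
    have htop : Submodule.span ℂ (Submonoid.closure (Set.range ι) : Set A) = ⊤ := by
      rw [← Algebra.adjoin_eq_span, hgen]
      rfl
    have : a ∈ Submodule.span ℂ (Submonoid.closure (Set.range ι) : Set A) := by
      rw [htop]; trivial
    refine Submodule.span_le.mpr ?_ this
    intro b hb
    obtain ⟨d, x, rfl⟩ := hclos b hb
    exact hmono d x
  exact ⟨lam, fun ψ => hK ψ⟩
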